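/- Let 1 < s < p and f ∈ L^p(ℝ) with ‖f‖_p = 1. For n ∈ ℤ and a dyadic interval I of length 2^n, define f_I^0 := f χ_I χ_{|f| ≤ 2^{-n/p}} and, for k ≥ 1, f_I^k := f χ_I χ_{2^{k-1} 2^{-n/p} < |f| ≤ 2^k 2^{-n/p}}. Then there exists a constant c > 0 (depending only on p, s) such that for every k ≥ 1, the triple sum over n ∈ ℤ of 2^{n s (1/p - 1/s)} times the sum over dyadic intervals I of length 2^n of ‖f_I^k‖_s^s is bounded by c · 2^{-k(p-s)}. -/

import Mathlib

open MeasureTheory ENNReal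

/-- The dyadic interval of length `2^n` starting at `m * 2^n`. -/
def dyadicInterval (n m : ℤ) : Set ℝ := Set.Ico ((m : ℝ) * 2 ^ (n : ℝ)) (((m : ℝ) + 1) * 2 ^ (n : ℝ))

-- The piece `f_I^k = f χ_I χ_{2^{k-1} 2^{-n/p} < |f| ≤ 2^k 2^{-n/p}}`, for `k ≥ 1`,
-- where `I` is the dyadic interval of length `2^n` indexed by `m`.
open Classical in
noncomputable def dyadicPiece (p : ℝ) (f : ℝ → ℂ) (n m : ℤ) (k : ℕ) : ℝ → ℂ := fun t =>
  if t ∈ dyadicInterval n m ∧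
      (2 : ℝ) ^ ((k : ℝ) - 1) * (2 : ℝ) ^ (-(n : ℝ) / p) < ‖f t‖ ∧
      ‖f t‖ ≤ (2 : ℝ) ^ (k : ℝ) * (2 : ℝ) ^ (-(n : ℝ) / p)
  then f t else 0

lemma dyadic_mem_iff (n m : ℤ) (t : ℝ) :
    t ∈ dyadicInterval n m ↔ ⌊t / 2 ^ (n : ℝ)⌋ = m := by
  have hc : (0:ℝ) < 2 ^ (n:ℝ) := Real.rpow_pos_of_pos two_pos _
  rw [dyadicInterval, Set.mem_Ico, Int.floor_eq_iff, le_div_iff₀ hc, div_lt_iff₀ hc]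

lemma dyadic_iUnion (n : ℤ) : (⋃ m : ℤ, dyadicInterval n m) = Set.univ := by
  ext t
  simp only [Set.mem_iUnion, Set.mem_univ, iff_true]
  exact ⟨⌊t / 2 ^ (n:ℝ)⌋, (dyadic_mem_iff n _ t).mpr rfl⟩

lemma dyadic_disjoint (n : ℤ) : Pairwise (Function.onFun Disjoint (dyadicInterval n)) := by
  intro m m' hne
  rw [Function.onFun, Set.disjoint_left]
  intro t ht ht'
  exact hne (((dyadic_mem_iff n m t).mp ht).symm.trans ((dyadic_mem_iff n m' t).mp ht'))

theorem stmt_4 (p s : ℝ) (hs : 1 < s) (hsp : s < p) (f : ℝ → ℂ)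
    (hf : MemLp f (ENNReal.ofReal p) volume)
    (hf1 : eLpNorm f (ENNReal.ofReal p) volume = 1) :
    ∃ c : ℝ, 0 < c ∧ ∀ k : ℕ, 1 ≤ k →
      ∑' n : ℤ, ENNReal.ofReal ((2 : ℝ) ^ ((n : ℝ) * s * (1 / p - 1 / s))) *
          ∑' m : ℤ, (eLpNorm (dyadicPiece p f n m k) (ENNReal.ofReal s) volume) ^ s
        ≤ ENNReal.ofReal (c * (2 : ℝ) ^ (-(k : ℝ) * (p - s))) := by
  have hs0 : (0:ℝ) < s := by linarith
  have hp0 : (0:ℝ) < p := by linarith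
  obtain ⟨g, hgm, hfg⟩ := hf.1
  have hgnorm : Measurable fun t => ‖g t‖ := hgm.measurable.norm
  -- the level sets
  set A : ℤ → ℕ → Set ℝ := fun n k =>
    (fun t => ‖g t‖) ⁻¹' Set.Ioc ((2:ℝ) ^ ((k:ℝ) - 1) * (2:ℝ) ^ (-(n:ℝ)/p))
      ((2:ℝ) ^ (k:ℝ) * (2:ℝ) ^ (-(n:ℝ)/p)) with hA
  have hAmeas : ∀ n k, MeasurableSet (A n k) := fun n k => hgnorm measurableSet_Ioc
  have hImeas : ∀ n m, MeasurableSet (dyadicInterval n m) := fun n m => measurableSet_Ico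
  -- dyadicPiece for g is an indicator
  have hpiece : ∀ n m k, dyadicPiece p g n m k = (dyadicInterval n m ∩ A n k).indicator g := by
    intro n m k
    classical
    funext t
    rw [Set.indicator_apply]
    exact if_congr Iff.rfl rfl rfl
  -- a.e. equality of pieces
  have hae : ∀ n m k, dyadicPiece p f n m k =ᶠ[ae volume] dyadicPiece p g n m k := by
    intro n m k
    filter_upwards [hfg] with t ht
    simp only [dyadicPiece]
    rw [ht]
  have hsne : ENNReal.ofReal s ≠ 0 := (ENNReal.ofReal_pos.mpr hs0).ne'
  have hstoReal : (ENNReal.ofReal s).toReal = s := ENNReal.toReal_ofReal hs0.le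
  -- the (n,m,k) term as an integral
  have hterm : ∀ n m k, eLpNorm (dyadicPiece p f n m k) (ENNReal.ofReal s) volume ^ s
      = ∫⁻ t in dyadicInterval n m ∩ A n k, (‖g t‖₊ : ℝ≥0∞) ^ s := by
    intro n m k
    rw [eLpNorm_congr_ae (hae n m k), hpiece n m k,
      eLpNorm_indicator_eq_eLpNorm_restrict ((hImeas n m).inter (hAmeas n k)),
      eLpNorm_eq_lintegral_rpow_enorm_toReal hsne ENNReal.ofReal_ne_top, hstoReal,
      ← ENNReal.rpow_mul, one_div, inv_mul_cancel₀ hs0.ne', ENNReal.rpow_one]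
    rfl
  -- sum over m
  have hsum_m : ∀ n k, (∑' m : ℤ, ∫⁻ t in dyadicInterval n m ∩ A n k, (‖g t‖₊ : ℝ≥0∞) ^ s)
      = ∫⁻ t in A n k, (‖g t‖₊ : ℝ≥0∞) ^ s := by
    intro n k
    rw [← lintegral_iUnion (fun m => (hImeas n m).inter (hAmeas n k))
      (fun m m' hne => (dyadic_disjoint n hne).mono Set.inter_subset_left Set.inter_subset_left)]
    congr 1
    rw [← Set.iUnion_inter, dyadic_iUnion, Set.univ_inter]
  -- pointwise bound on A n k
  have hpt : ∀ n k, ∀ t ∈ A n k, (‖g t‖₊ : ℝ≥0∞) ^ s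
      ≤ ENNReal.ofReal ((2:ℝ) ^ (((k:ℝ) - 1 - (n:ℝ)/p) * (s - p))) * (‖g t‖₊ : ℝ≥0∞) ^ p := by
    intro n k t ht
    obtain ⟨h1, _⟩ := ht
    have hL : (2:ℝ) ^ ((k:ℝ) - 1) * (2:ℝ) ^ (-(n:ℝ)/p) = (2:ℝ) ^ ((k:ℝ) - 1 - (n:ℝ)/p) := by
      rw [← Real.rpow_add two_pos]; ring_nf
    rw [hL] at h1
    have hLpos : (0:ℝ) < (2:ℝ) ^ ((k:ℝ) - 1 - (n:ℝ)/p) := Real.rpow_pos_of_pos two_pos _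
    have hgt : (0:ℝ) < ‖g t‖ := lt_trans hLpos h1
    have key : ‖g t‖ ^ s ≤ (2:ℝ) ^ (((k:ℝ) - 1 - (n:ℝ)/p) * (s - p)) * ‖g t‖ ^ p := by
      have h2 : ‖g t‖ ^ (s - p) ≤ ((2:ℝ) ^ ((k:ℝ) - 1 - (n:ℝ)/p)) ^ (s - p) :=
        Real.rpow_le_rpow_of_nonpos hLpos h1.le (by linarith)
      rw [← Real.rpow_mul (by norm_num)] at h2
      calc ‖g t‖ ^ s = ‖g t‖ ^ (s - p) * ‖g t‖ ^ p := by
            rw [← Real.rpow_add hgt]; ring_nf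
        _ ≤ _ := by
            exact mul_le_mul_of_nonneg_right h2 (Real.rpow_nonneg (norm_nonneg _) p)
    calc (‖g t‖₊ : ℝ≥0∞) ^ s = ENNReal.ofReal (‖g t‖ ^ s) := by
          rw [← enorm_eq_nnnorm, ← ofReal_norm, ENNReal.ofReal_rpow_of_nonneg (norm_nonneg _) hs0.le]
      _ ≤ ENNReal.ofReal ((2:ℝ) ^ (((k:ℝ) - 1 - (n:ℝ)/p) * (s - p)) * ‖g t‖ ^ p) :=
          ENNReal.ofReal_le_ofReal key
      _ = _ := by
          rw [ENNReal.ofReal_mul (Real.rpow_nonneg (by norm_num) _),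
            ← enorm_eq_nnnorm, ← ofReal_norm, ENNReal.ofReal_rpow_of_nonneg (norm_nonneg _) hp0.le]
  -- integral of |g|^p is 1
  have hint1 : ∫⁻ t, (‖g t‖₊ : ℝ≥0∞) ^ p = 1 := by
    have hpne : ENNReal.ofReal p ≠ 0 := (ENNReal.ofReal_pos.mpr hp0).ne'
    have h := hf1
    rw [eLpNorm_congr_ae hfg, eLpNorm_eq_lintegral_rpow_enorm_toReal hpne ENNReal.ofReal_ne_top,
      ENNReal.toReal_ofReal hp0.le] at h
    have := congrArg (· ^ p) h
    exact (by simpa [← ENNReal.rpow_mul, one_div, inv_mul_cancel₀ hp0.ne'] using this : ∫⁻ x, ‖g x‖ₑ ^ p = 1)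
  -- counting: for each t, at most ⌈p⌉₊ values of n have t ∈ A n k
  have hcount : ∀ k, (∑' n : ℤ, ∫⁻ t in A n k, (‖g t‖₊ : ℝ≥0∞) ^ p)
      ≤ (⌈p⌉₊ : ℝ≥0∞) := by
    intro k
    have hmeasp : Measurable fun t => (‖g t‖₊ : ℝ≥0∞) ^ p :=
      hgm.measurable.enorm.pow_const p
    calc (∑' n : ℤ, ∫⁻ t in A n k, (‖g t‖₊ : ℝ≥0∞) ^ p)
        = ∑' n : ℤ, ∫⁻ t, (A n k).indicator (fun t => (‖g t‖₊ : ℝ≥0∞) ^ p) t := by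
          refine tsum_congr fun n => ?_
          rw [lintegral_indicator (hAmeas n k)]
      _ = ∫⁻ t, ∑' n : ℤ, (A n k).indicator (fun t => (‖g t‖₊ : ℝ≥0∞) ^ p) t := by
          rw [lintegral_tsum fun n => (hmeasp.indicator (hAmeas n k)).aemeasurable]
      _ ≤ ∫⁻ t, (⌈p⌉₊ : ℝ≥0∞) * (‖g t‖₊ : ℝ≥0∞) ^ p := by
          refine lintegral_mono fun t => ?_
          set a : ℝ := p * ((k:ℝ) - Real.logb 2 ‖g t‖) with ha
          set F : Finset ℤ := Finset.Icc (⌊a⌋ - ⌈p⌉ + 1) ⌊a⌋ with hF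
          have hsub : ∀ n : ℤ, t ∈ A n k → n ∈ F := by
            intro n hn
            obtain ⟨h1, h2⟩ := hn
            have hL : (2:ℝ) ^ ((k:ℝ) - 1) * (2:ℝ) ^ (-(n:ℝ)/p) = (2:ℝ) ^ ((k:ℝ) - 1 - (n:ℝ)/p) := by
              rw [← Real.rpow_add two_pos]; ring_nf
            have hU : (2:ℝ) ^ ((k:ℝ)) * (2:ℝ) ^ (-(n:ℝ)/p) = (2:ℝ) ^ ((k:ℝ) - (n:ℝ)/p) := by
              rw [← Real.rpow_add two_pos]; ring_nf
            rw [hL] at h1; rw [hU] at h2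
            have hgt : (0:ℝ) < ‖g t‖ := lt_trans (Real.rpow_pos_of_pos two_pos _) h1
            have hx1 : (k:ℝ) - 1 - (n:ℝ)/p < Real.logb 2 ‖g t‖ :=
              (Real.lt_logb_iff_rpow_lt one_lt_two hgt).mpr h1
            have hx2 : Real.logb 2 ‖g t‖ ≤ (k:ℝ) - (n:ℝ)/p :=
              (Real.logb_le_iff_le_rpow one_lt_two hgt).mpr h2
            set x := Real.logb 2 ‖g t‖
            have hub : (n:ℝ) ≤ a := by
              rw [ha]
              have : (n:ℝ)/p ≤ (k:ℝ) - x := by linarith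
              calc (n:ℝ) = ((n:ℝ)/p) * p := by field_simp
                _ ≤ ((k:ℝ) - x) * p := mul_le_mul_of_nonneg_right this hp0.le
                _ = p * ((k:ℝ) - x) := mul_comm _ _
            have hlb : a - p < (n:ℝ) := by
              rw [ha]
              have h3 : (k:ℝ) - x < (n:ℝ)/p + 1 := by linarith
              have := mul_lt_mul_of_pos_left h3 hp0
              have h4 : p * ((n:ℝ)/p + 1) = (n:ℝ) + p := by field_simp
              linarith [h4 ▸ this]
            rw [hF, Finset.mem_Icc]
            constructor
            · have : (⌊a⌋ : ℝ) - (⌈p⌉ : ℝ) < (n:ℝ) := by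
                have h5 : (⌊a⌋ : ℝ) ≤ a := Int.floor_le a
                have h6 : p ≤ (⌈p⌉ : ℝ) := Int.le_ceil p
                linarith
              have : (⌊a⌋ - ⌈p⌉ : ℤ) < n := by exact_mod_cast (by push_cast; linarith : ((⌊a⌋ - ⌈p⌉ : ℤ) : ℝ) < (n:ℝ))
              omega
            · exact Int.le_floor.mpr hub
          calc (∑' n : ℤ, (A n k).indicator (fun t => (‖g t‖₊ : ℝ≥0∞) ^ p) t)
              = ∑ n ∈ F, (A n k).indicator (fun t => (‖g t‖₊ : ℝ≥0∞) ^ p) t := by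
                refine tsum_eq_sum fun n hn => ?_
                rw [Set.indicator_apply_eq_zero]
                intro hmem
                exact absurd (hsub n hmem) hn
            _ ≤ ∑ _n ∈ F, (‖g t‖₊ : ℝ≥0∞) ^ p :=
                Finset.sum_le_sum fun n _ => Set.indicator_apply_le fun _ => le_rfl
            _ = (F.card : ℝ≥0∞) * (‖g t‖₊ : ℝ≥0∞) ^ p := by
                rw [Finset.sum_const, nsmul_eq_mul]
            _ ≤ (⌈p⌉₊ : ℝ≥0∞) * (‖g t‖₊ : ℝ≥0∞) ^ p := by
                refine mul_le_mul_left ?_ _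
                have : F.card = (⌈p⌉ : ℤ).toNat := by
                  rw [hF, Int.card_Icc]; congr 1; ring
                rw [this, Int.ceil_toNat]
      _ = (⌈p⌉₊ : ℝ≥0∞) * ∫⁻ t, (‖g t‖₊ : ℝ≥0∞) ^ p :=
          lintegral_const_mul' _ _ (by simp)
      _ = (⌈p⌉₊ : ℝ≥0∞) := by rw [hint1, mul_one]
  -- main estimate
  refine ⟨(⌈p⌉₊ : ℝ) * (2:ℝ) ^ (p - s), by positivity, fun k _ => ?_⟩
  have step1 : ∀ n : ℤ, ENNReal.ofReal ((2 : ℝ) ^ ((n : ℝ) * s * (1 / p - 1 / s))) *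
      ∑' m : ℤ, (eLpNorm (dyadicPiece p f n m k) (ENNReal.ofReal s) volume) ^ s
      ≤ ENNReal.ofReal ((2:ℝ) ^ (((k:ℝ) - 1) * (s - p))) * ∫⁻ t in A n k, (‖g t‖₊ : ℝ≥0∞) ^ p := by
    intro n
    have h1 : (∑' m : ℤ, (eLpNorm (dyadicPiece p f n m k) (ENNReal.ofReal s) volume) ^ s)
        = ∫⁻ t in A n k, (‖g t‖₊ : ℝ≥0∞) ^ s := by
      rw [← hsum_m n k]; exact tsum_congr fun m => hterm n m k
    rw [h1]
    have h2 : ∫⁻ t in A n k, (‖g t‖₊ : ℝ≥0∞) ^ s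
        ≤ ENNReal.ofReal ((2:ℝ) ^ (((k:ℝ) - 1 - (n:ℝ)/p) * (s - p))) *
          ∫⁻ t in A n k, (‖g t‖₊ : ℝ≥0∞) ^ p := by
      rw [← lintegral_const_mul' _ _ ENNReal.ofReal_ne_top]
      exact setLIntegral_mono
        (measurable_const.mul (hgm.measurable.enorm.pow_const p)) (hpt n k)
    calc ENNReal.ofReal ((2 : ℝ) ^ ((n : ℝ) * s * (1 / p - 1 / s))) *
          ∫⁻ t in A n k, (‖g t‖₊ : ℝ≥0∞) ^ s
        ≤ ENNReal.ofReal ((2 : ℝ) ^ ((n : ℝ) * s * (1 / p - 1 / s))) *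
          (ENNReal.ofReal ((2:ℝ) ^ (((k:ℝ) - 1 - (n:ℝ)/p) * (s - p))) *
            ∫⁻ t in A n k, (‖g t‖₊ : ℝ≥0∞) ^ p) := mul_le_mul_right h2 _
      _ = ENNReal.ofReal ((2:ℝ) ^ (((k:ℝ) - 1) * (s - p))) * ∫⁻ t in A n k, (‖g t‖₊ : ℝ≥0∞) ^ p := by
          rw [← mul_assoc, ← ENNReal.ofReal_mul (Real.rpow_nonneg (by norm_num) _),
            ← Real.rpow_add two_pos]
          congr 3
          field_simp
          ring
  calc (∑' n : ℤ, ENNReal.ofReal ((2 : ℝ) ^ ((n : ℝ) * s * (1 / p - 1 / s))) *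
        ∑' m : ℤ, (eLpNorm (dyadicPiece p f n m k) (ENNReal.ofReal s) volume) ^ s)
      ≤ ∑' n : ℤ, ENNReal.ofReal ((2:ℝ) ^ (((k:ℝ) - 1) * (s - p))) *
          ∫⁻ t in A n k, (‖g t‖₊ : ℝ≥0∞) ^ p := ENNReal.tsum_le_tsum step1
    _ = ENNReal.ofReal ((2:ℝ) ^ (((k:ℝ) - 1) * (s - p))) *
          ∑' n : ℤ, ∫⁻ t in A n k, (‖g t‖₊ : ℝ≥0∞) ^ p := ENNReal.tsum_mul_left
    _ ≤ ENNReal.ofReal ((2:ℝ) ^ (((k:ℝ) - 1) * (s - p))) * (⌈p⌉₊ : ℝ≥0∞) :=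
        mul_le_mul_right (hcount k) _
    _ = ENNReal.ofReal ((⌈p⌉₊ : ℝ) * (2:ℝ) ^ (p - s) * (2 : ℝ) ^ (-(k : ℝ) * (p - s))) := by
        rw [← ENNReal.ofReal_natCast, ← ENNReal.ofReal_mul (Real.rpow_nonneg (by norm_num) _)]
        congr 1
        have he : ((k:ℝ)-1)*(s-p) = (p - s) + (-(k:ℝ)*(p-s)) := by ring
        rw [mul_assoc, ← Real.rpow_add two_pos, ← he]
        exact mul_comm _ _
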